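/- arXiv:2303.04444 — 3 statements merged into one kernel-verified Lean document; each statement's English description precedes it below -/
import Mathlib

section
/- Let M_0 > 0 be such that x^* ∈ B(0,M_0) and inf_{|x| > M_0} inf_{z ∈ Q} v(x,z) > 4V^*/P(Z ∈ Q) (such M_0 exists by the coercivity assumption (ii)). Then there exists C > 0 such that for all n ≥ 1, E[|V_n(X_n^*) − V^*| · 1_{|X_n^*| > M_0}] ≤ C n^{−1}. -/
open MeasureTheory ProbabilityTheory Filter

namespace Lemma2Aux

variable {Ω : Type*} [MeasurableSpace Ω] {P : Measure Ω} [IsProbabilityMeasure P]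

lemma integral_comp_eq {E : Type*} [MeasurableSpace E]
    {f g : Ω → E} (hf : Measurable f) (hg : Measurable g)
    (h : Measure.map f P = Measure.map g P) {φ : E → ℝ} (hφ : Measurable φ) :
    ∫ ω, φ (f ω) ∂P = ∫ ω, φ (g ω) ∂P := by
  rw [← integral_map hf.aemeasurable hφ.aestronglyMeasurable, h,
    integral_map hg.aemeasurable hφ.aestronglyMeasurable]

lemma memℒp_of_map_eq {f g : Ω → ℝ} (hf : Measurable f) (hg : Measurable g)
    (h : Measure.map f P = Measure.map g P) (hgmem : MemLp g 2 P) : MemLp f 2 P := by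
  have h1 : MemLp (id : ℝ → ℝ) 2 (Measure.map g P) :=
    (memLp_map_measure_iff aestronglyMeasurable_id hg.aemeasurable).2 hgmem
  have h2 : MemLp (id : ℝ → ℝ) 2 (Measure.map f P) := by rwa [h]
  exact (memLp_map_measure_iff aestronglyMeasurable_id hf.aemeasurable).1 h2

lemma variance_of_map_eq {f g : Ω → ℝ} (hf : Measurable f) (hg : Measurable g)
    (h : Measure.map f P = Measure.map g P) (hgmem : MemLp g 2 P) :
    variance f P = variance g P := by
  have hfmem := memℒp_of_map_eq hf hg h hgmem
  rw [variance_eq_sub hfmem, variance_eq_sub hgmem]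
  have h1 : ∫ ω, (f ω)^2 ∂P = ∫ ω, (g ω)^2 ∂P :=
    integral_comp_eq hf hg h (measurable_id.pow_const 2)
  have h2 : ∫ ω, f ω ∂P = ∫ ω, g ω ∂P := integral_comp_eq hf hg h measurable_id
  simp only [Pi.pow_apply]
  rw [h1, h2]

lemma l2_bound (X : ℕ → Ω → ℝ) (hmeas : ∀ i, Measurable (X i))
    (hident : ∀ i, Measure.map (X i) P = Measure.map (X 0) P)
    (hindep : ∀ i j, i ≠ j → IndepFun (X i) (X j) P)
    (hmem0 : MemLp (X 0) 2 P) (μ0 : ℝ) (hμ0 : ∫ ω, X 0 ω ∂P = μ0)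
    (n : ℕ) (hn : 1 ≤ n) :
    Integrable (fun ω => ((n:ℝ)⁻¹ * ∑ i ∈ Finset.range n, X i ω - μ0)^2) P ∧
    ∫ ω, ((n:ℝ)⁻¹ * ∑ i ∈ Finset.range n, X i ω - μ0)^2 ∂P ≤ variance (X 0) P / n := by
  have hmem : ∀ i, MemLp (X i) 2 P := fun i =>
    memℒp_of_map_eq (hmeas i) (hmeas 0) (hident i) hmem0
  have hE : ∀ i, ∫ ω, X i ω ∂P = μ0 := fun i => by
    rw [← hμ0]; exact integral_comp_eq (hmeas i) (hmeas 0) (hident i) measurable_id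
  have hVar : ∀ i, variance (X i) P = variance (X 0) P := fun i =>
    variance_of_map_eq (hmeas i) (hmeas 0) (hident i) hmem0
  have hn0 : ((n:ℝ)) ≠ 0 := Nat.cast_ne_zero.2 (by omega)
  have hSmem : MemLp (∑ i ∈ Finset.range n, X i) 2 P :=
    memLp_finset_sum' _ fun i _ => hmem i
  have hSvar : variance (∑ i ∈ Finset.range n, X i) P = n * variance (X 0) P := by
    rw [IndepFun.variance_sum (fun i _ => hmem i) (fun i _ j _ hij => hindep i j hij)]
    rw [Finset.sum_congr rfl fun i _ => hVar i, Finset.sum_const, Finset.card_range,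
      nsmul_eq_mul]
  have hES : ∫ ω, (∑ i ∈ Finset.range n, X i) ω ∂P = n * μ0 := by
    simp only [Finset.sum_apply]
    rw [integral_finset_sum _ fun i _ => (hmem i).integrable one_le_two]
    simp [hE, Finset.sum_const, Finset.card_range, nsmul_eq_mul]
  have hkey : (fun ω => ((n:ℝ)⁻¹ * ∑ i ∈ Finset.range n, X i ω - μ0)^2)
      = fun ω => ((n:ℝ)⁻¹)^2 *
        ((∑ i ∈ Finset.range n, X i) ω - ∫ ω', (∑ i ∈ Finset.range n, X i) ω' ∂P)^2 := by
    funext ω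
    rw [hES]
    simp only [Finset.sum_apply]
    have : (n:ℝ)⁻¹ * (∑ i ∈ Finset.range n, X i ω) - μ0
        = (n:ℝ)⁻¹ * ((∑ i ∈ Finset.range n, X i ω) - n * μ0) := by
      field_simp
    rw [this, mul_pow]
  have hcint : Integrable (fun ω =>
      ((∑ i ∈ Finset.range n, X i) ω - ∫ ω', (∑ i ∈ Finset.range n, X i) ω' ∂P)^2) P := by
    have := (hSmem.sub (memLp_const (∫ ω', (∑ i ∈ Finset.range n, X i) ω' ∂P))).integrable_sq
    simpa [Pi.sub_apply] using this
  have hvareq : ∫ ω,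
      ((∑ i ∈ Finset.range n, X i) ω - ∫ ω', (∑ i ∈ Finset.range n, X i) ω' ∂P)^2 ∂P
      = variance (∑ i ∈ Finset.range n, X i) P := by
    rw [variance_eq_integral hSmem.aestronglyMeasurable.aemeasurable]
  constructor
  · rw [hkey]; exact hcint.const_mul _
  · rw [hkey, integral_const_mul, hvareq, hSvar]
    have hvnn : 0 ≤ variance (X 0) P := variance_nonneg _ _
    rw [show ((n:ℝ)⁻¹)^2 * ((n:ℝ) * variance (X 0) P) = variance (X 0) P / n by
      field_simp]

end Lemma2Aux


set_option maxHeartbeats 1000000 in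
/-- **Lemma 2.** Let `M₀ > 0` be such that `x⋆ ∈ B(0,M₀)` and
`inf_{|x| > M₀} inf_{z ∈ Q} v(x,z) > 4V*/P(Z ∈ Q)` (such an `M₀` exists by the
coercivity assumption (ii)). Then there exists `C > 0` such that for all `n ≥ 1`,
`𝔼[|Vₙ(Xₙ*) − V*| · 1_{|Xₙ*| > M₀}] ≤ C n⁻¹`. -/
theorem lemma2_expectation_outside_ball
    (d q : ℕ) (hd : 0 < d) (hq : 0 < q)
    (Ω : Type*) [MeasurableSpace Ω] (P : Measure Ω) [IsProbabilityMeasure P]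
    -- the i.i.d. samples `Z₁, Z₂, …`
    (Z : ℕ → Ω → EuclideanSpace ℝ (Fin q))
    (hZmeas : ∀ i, Measurable (Z i))
    (hZident : ∀ i, Measure.map (Z i) P = Measure.map (Z 0) P)
    (hZindep : iIndepFun Z P)
    -- `V` continuous, positive, coercive, with minimizer `x⋆` and `𝔼[v(x,Z)] = V(x)`
    (V : EuclideanSpace ℝ (Fin d) → ℝ)
    (hVcont : Continuous V) (hVpos : ∀ x, 0 < V x)
    (hVcoercive : Tendsto V (cocompact (EuclideanSpace ℝ (Fin d))) atTop)
    (v : EuclideanSpace ℝ (Fin d) → EuclideanSpace ℝ (Fin q) → ℝ)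
    (hvcont : Continuous (fun p : EuclideanSpace ℝ (Fin d) × EuclideanSpace ℝ (Fin q) => v p.1 p.2))
    (hvnonneg : ∀ x z, 0 ≤ v x z)
    (hvint : ∀ x, Integrable (fun ω => v x (Z 0 ω)) P)
    (hvmean : ∀ x, ∫ ω, v x (Z 0 ω) ∂P = V x)
    (xstar : EuclideanSpace ℝ (Fin d))
    (hxstar_min : ∀ x, V xstar ≤ V x)
    -- assumption (ii): compact `Q` with `κ := P(Z ∈ Q) > 0` and coercive `x ↦ inf_{z ∈ Q} v(x,z)`
    (Q : Set (EuclideanSpace ℝ (Fin q))) (hQcomp : IsCompact Q)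
    (hκpos : 0 < (P {ω | Z 0 ω ∈ Q}).toReal)
    (hQcoercive : Tendsto (fun x => ⨅ z : Q, v x (z : EuclideanSpace ℝ (Fin q)))
      (cocompact (EuclideanSpace ℝ (Fin d))) atTop)
    -- assumption (iv): `𝔼[v(x⋆,Z)²] < ∞`
    (hsq : Integrable (fun ω => (v xstar (Z 0 ω)) ^ 2) P)
    -- the empirical functions `Vₙ` and their (measurable) minimizers `Xₙ*`
    (Vn : ℕ → Ω → EuclideanSpace ℝ (Fin d) → ℝ)
    (hVn : ∀ n ω x, Vn n ω x = (n : ℝ)⁻¹ * ∑ i ∈ Finset.range n, v x (Z i ω))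
    (Xn : ℕ → Ω → EuclideanSpace ℝ (Fin d))
    (hXnmeas : ∀ n, Measurable (Xn n))
    (hXnmin : ∀ n ω x, Vn n ω (Xn n ω) ≤ Vn n ω x)
    -- the choice of `M₀`: `x⋆ ∈ B(0,M₀)` and `inf_{|x|>M₀} inf_{z∈Q} v(x,z) > 4V*/P(Z∈Q)`
    (M0 : ℝ) (hM0pos : 0 < M0) (hxstarM0 : ‖xstar‖ ≤ M0)
    (hM0inf : ∃ m : ℝ, 4 * V xstar / (P {ω | Z 0 ω ∈ Q}).toReal < m ∧
      ∀ x : EuclideanSpace ℝ (Fin d), M0 < ‖x‖ → ∀ z ∈ Q, m ≤ v x z) :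
    ∃ C : ℝ, 0 < C ∧ ∀ n : ℕ, 1 ≤ n →
      ∫ ω in {ω | M0 < ‖Xn n ω‖}, |Vn n ω (Xn n ω) - V xstar| ∂P ≤ C / n := by
  classical
  obtain ⟨m, hm1, hm2⟩ := hM0inf
  set κ := (P {ω | Z 0 ω ∈ Q}).toReal with hκdef
  set Vs := V xstar with hVsdef
  have hVs_pos : 0 < Vs := hVpos xstar
  have hκ0 : κ ≠ 0 := ne_of_gt hκpos
  have hm_pos : 0 < m := lt_trans (by positivity) hm1
  -- the real-valued samples
  set gv : EuclideanSpace ℝ (Fin q) → ℝ := fun z => v xstar z with hgvdef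
  have hgvmeas : Measurable gv :=
    (hvcont.comp (Continuous.prodMk_right xstar)).measurable
  set gI : EuclideanSpace ℝ (Fin q) → ℝ := Q.indicator (fun _ => (1:ℝ)) with hgIdef
  have hQms : MeasurableSet Q := hQcomp.isClosed.measurableSet
  have hgImeas : Measurable gI := measurable_const.indicator hQms
  set X : ℕ → Ω → ℝ := fun i ω => gv (Z i ω) with hXdef
  set Y : ℕ → Ω → ℝ := fun i ω => gI (Z i ω) with hYdef
  have hXmeas : ∀ i, Measurable (X i) := fun i => hgvmeas.comp (hZmeas i)
  have hYmeas : ∀ i, Measurable (Y i) := fun i => hgImeas.comp (hZmeas i)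
  have hXident : ∀ i, Measure.map (X i) P = Measure.map (X 0) P := by
    intro i
    calc Measure.map (X i) P = (P.map (Z i)).map gv := (Measure.map_map hgvmeas (hZmeas i)).symm
      _ = (P.map (Z 0)).map gv := by rw [hZident i]
      _ = Measure.map (X 0) P := Measure.map_map hgvmeas (hZmeas 0)
  have hYident : ∀ i, Measure.map (Y i) P = Measure.map (Y 0) P := by
    intro i
    calc Measure.map (Y i) P = (P.map (Z i)).map gI := (Measure.map_map hgImeas (hZmeas i)).symm
      _ = (P.map (Z 0)).map gI := by rw [hZident i]
      _ = Measure.map (Y 0) P := Measure.map_map hgImeas (hZmeas 0)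
  have hXindep : ∀ i j, i ≠ j → IndepFun (X i) (X j) P := fun i j hij =>
    (hZindep.indepFun hij).comp hgvmeas hgvmeas
  have hYindep : ∀ i j, i ≠ j → IndepFun (Y i) (Y j) P := fun i j hij =>
    (hZindep.indepFun hij).comp hgImeas hgImeas
  have hXmem0 : MemLp (X 0) 2 P :=
    (memLp_two_iff_integrable_sq (hXmeas 0).aestronglyMeasurable).2 hsq
  have hYmem0 : MemLp (Y 0) 2 P := by
    refine MemLp.of_bound (hYmeas 0).aestronglyMeasurable 1 (Filter.Eventually.of_forall ?_)
    intro ω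
    by_cases h : Z 0 ω ∈ Q <;>
      simp [hYdef, hgIdef, Set.indicator_apply, h]
  have hXmean : ∫ ω, X 0 ω ∂P = Vs := hvmean xstar
  have hYmean : ∫ ω, Y 0 ω ∂P = κ := by
    have heq : (fun ω => Y 0 ω) = (Z 0 ⁻¹' Q).indicator (fun _ => (1:ℝ)) := by
      funext ω
      by_cases h : Z 0 ω ∈ Q <;>
        simp [hYdef, hgIdef, Set.indicator_apply, h]
    rw [heq, integral_indicator_const (1:ℝ) ((hZmeas 0) hQms)]
    simp [hκdef]
    rfl
  set σX := variance (X 0) P with hσXdef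
  set σY := variance (Y 0) P with hσYdef
  have hσX0 : 0 ≤ σX := variance_nonneg _ _
  have hσY0 : 0 ≤ σY := variance_nonneg _ _
  set c₁ : ℝ := 4/κ^2 * σY + 1/Vs^2 * σX with hc₁def
  have hc₁0 : 0 ≤ c₁ :=
    add_nonneg (mul_nonneg (by positivity) hσY0) (mul_nonneg (by positivity) hσX0)
  have hCpos : 0 < (Vs + 1/2) * c₁ + σX/2 + 1 := by
    have := mul_nonneg (by linarith : (0:ℝ) ≤ Vs + 1/2) hc₁0
    linarith
  refine ⟨(Vs + 1/2) * c₁ + σX/2 + 1, hCpos, ?_⟩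
  intro n hn
  have hnR : (0:ℝ) < n := by exact_mod_cast hn
  -- the two L² bounds
  obtain ⟨hXint, hXbd⟩ := Lemma2Aux.l2_bound X hXmeas hXident hXindep hXmem0 Vs hXmean n hn
  obtain ⟨hYint, hYbd⟩ := Lemma2Aux.l2_bound Y hYmeas hYident hYindep hYmem0 κ hYmean n hn
  set A := {ω | M0 < ‖Xn n ω‖} with hAdef
  have hA : MeasurableSet A := measurableSet_lt measurable_const (hXnmeas n).norm
  -- notation for the empirical averages
  set Sn : Ω → ℝ := fun ω => (n:ℝ)⁻¹ * ∑ i ∈ Finset.range n, X i ω with hSndef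
  set Tn : Ω → ℝ := fun ω => (n:ℝ)⁻¹ * ∑ i ∈ Finset.range n, Y i ω with hTndef
  -- basic pointwise facts
  have hfn_nonneg : ∀ ω, 0 ≤ Vn n ω (Xn n ω) := by
    intro ω
    rw [hVn n ω]
    exact mul_nonneg (by positivity) (Finset.sum_nonneg fun i _ => hvnonneg _ _)
  have hfn_le : ∀ ω, Vn n ω (Xn n ω) ≤ Sn ω := by
    intro ω
    calc Vn n ω (Xn n ω) ≤ Vn n ω xstar := hXnmin n ω xstar
      _ = Sn ω := by rw [hVn n ω xstar]
  have hmT_le : ∀ ω ∈ A, m * Tn ω ≤ Vn n ω (Xn n ω) := by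
    intro ω hω
    have hω' : M0 < ‖Xn n ω‖ := hω
    rw [hVn n ω]
    have hterm : ∀ i ∈ Finset.range n, m * Y i ω ≤ v (Xn n ω) (Z i ω) := by
      intro i _
      by_cases hz : Z i ω ∈ Q
      · have : Y i ω = 1 := by simp [hYdef, hgIdef, Set.indicator_apply, hz]
        rw [this, mul_one]
        exact hm2 _ hω' _ hz
      · have : Y i ω = 0 := by simp [hYdef, hgIdef, Set.indicator_apply, hz]
        rw [this, mul_zero]
        exact hvnonneg _ _
    calc m * Tn ω = (n:ℝ)⁻¹ * ∑ i ∈ Finset.range n, m * Y i ω := by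
          simp only [hTndef]; rw [← Finset.mul_sum]; ring
      _ ≤ (n:ℝ)⁻¹ * ∑ i ∈ Finset.range n, v (Xn n ω) (Z i ω) :=
          mul_le_mul_of_nonneg_left (Finset.sum_le_sum hterm) (by positivity)
  -- abstract key inequality
  have keylem : ∀ t s : ℝ, m * t ≤ s →
      1 ≤ 4/κ^2 * (t - κ)^2 + 1/Vs^2 * (s - Vs)^2 := by
    intro t s hts
    by_cases hc : t < κ/2
    · have h1 : κ^2/4 ≤ (t - κ)^2 := by nlinarith
      have h2 : 0 ≤ 1/Vs^2 * (s - Vs)^2 := by positivity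
      have h4 := mul_le_mul_of_nonneg_left h1 (le_of_lt (by positivity : (0:ℝ) < 4/κ^2))
      have h5 : 4/κ^2 * (κ^2/4) = 1 := by field_simp
      linarith
    · push_neg at hc
      have hmt : m * (κ/2) ≤ m * t := mul_le_mul_of_nonneg_left hc hm_pos.le
      have h2Vs : 2*Vs < m * (κ/2) := by
        have hmm := mul_lt_mul_of_pos_right hm1 (by positivity : (0:ℝ) < κ/2)
        have he : 4*Vs/κ * (κ/2) = 2*Vs := by field_simp; ring
        linarith
      have hs2 : 2*Vs < s := by linarith
      have h1 : Vs^2 ≤ (s - Vs)^2 := by nlinarith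
      have h4 := mul_le_mul_of_nonneg_left h1 (le_of_lt (by positivity : (0:ℝ) < 1/Vs^2))
      have h5 : 1/Vs^2 * Vs^2 = 1 := by field_simp
      have h6 : 0 ≤ 4/κ^2 * (t - κ)^2 := by positivity
      linarith
  have hptA : ∀ ω ∈ A, (1:ℝ) ≤ 4/κ^2 * (Tn ω - κ)^2 + 1/Vs^2 * (Sn ω - Vs)^2 := by
    intro ω hω
    exact keylem (Tn ω) (Sn ω) (le_trans (hmT_le ω hω) (hfn_le ω))
  -- integrability of the minimizer value
  have hfnmeas : Measurable (fun ω => Vn n ω (Xn n ω)) := by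
    have heq : (fun ω => Vn n ω (Xn n ω))
        = fun ω => (n:ℝ)⁻¹ * ∑ i ∈ Finset.range n, v (Xn n ω) (Z i ω) :=
      funext fun ω => hVn n ω _
    rw [heq]
    exact (Finset.measurable_sum _ fun i _ =>
      hvcont.measurable.comp ((hXnmeas n).prodMk (hZmeas i))).const_mul _
  have hSnint : Integrable Sn P := by
    refine Integrable.const_mul ?_ _
    exact integrable_finset_sum _ fun i _ =>
      (Lemma2Aux.memℒp_of_map_eq (hXmeas i) (hXmeas 0) (hXident i) hXmem0).integrable one_le_two
  have hfnint : Integrable (fun ω => Vn n ω (Xn n ω)) P := by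
    refine hSnint.mono' hfnmeas.aestronglyMeasurable (Filter.Eventually.of_forall fun ω => ?_)
    rw [Real.norm_eq_abs, abs_of_nonneg (hfn_nonneg ω)]
    exact hfn_le ω
  have habs_int : Integrable (fun ω => |Vn n ω (Xn n ω) - Vs|) P :=
    (hfnint.sub (integrable_const Vs)).abs
  have hXint' : Integrable (fun ω => (Sn ω - Vs)^2) P := hXint
  have hYint' : Integrable (fun ω => (Tn ω - κ)^2) P := hYint
  have hXbd' : ∫ ω, (Sn ω - Vs)^2 ∂P ≤ σX / n := hXbd
  have hYbd' : ∫ ω, (Tn ω - κ)^2 ∂P ≤ σY / n := hYbd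
  -- bound on the measure of A
  have hPA : (P A).toReal ≤ c₁ / n := by
    calc (P A).toReal = ∫ _ω in A, (1:ℝ) ∂P := by rw [setIntegral_const]; simp; rfl
      _ ≤ ∫ ω in A, (4/κ^2 * (Tn ω - κ)^2 + 1/Vs^2 * (Sn ω - Vs)^2) ∂P := by
          refine setIntegral_mono_on (integrableOn_const (measure_ne_top P A))
            (((hYint'.const_mul _).add (hXint'.const_mul _)).integrableOn) hA hptA
      _ ≤ ∫ ω, (4/κ^2 * (Tn ω - κ)^2 + 1/Vs^2 * (Sn ω - Vs)^2) ∂P :=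
          setIntegral_le_integral ((hYint'.const_mul _).add (hXint'.const_mul _))
            (Filter.Eventually.of_forall fun ω => by positivity)
      _ = 4/κ^2 * ∫ ω, (Tn ω - κ)^2 ∂P + 1/Vs^2 * ∫ ω, (Sn ω - Vs)^2 ∂P := by
          rw [integral_add (hYint'.const_mul _) (hXint'.const_mul _),
            integral_const_mul, integral_const_mul]
      _ ≤ 4/κ^2 * (σY/n) + 1/Vs^2 * (σX/n) :=
          add_le_add (mul_le_mul_of_nonneg_left hYbd' (by positivity))
            (mul_le_mul_of_nonneg_left hXbd' (by positivity))
      _ = c₁ / n := by rw [hc₁def]; ring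
  -- final chain
  have hpt5 : ∀ ω, |Vn n ω (Xn n ω) - Vs| ≤ (Vs + 1/2) + (1/2) * (Sn ω - Vs)^2 := by
    intro ω
    have h0 := hfn_nonneg ω
    have h1 := hfn_le ω
    refine abs_le.2 ⟨?_, ?_⟩
    · nlinarith [sq_nonneg (Sn ω - Vs)]
    · nlinarith [sq_nonneg (Sn ω - Vs - 1)]
  calc ∫ ω in A, |Vn n ω (Xn n ω) - Vs| ∂P
      ≤ ∫ ω in A, ((Vs + 1/2) + (1/2) * (Sn ω - Vs)^2) ∂P := by
        refine setIntegral_mono_on habs_int.integrableOn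
          ((integrableOn_const (measure_ne_top P A)).add
            (hXint'.const_mul _).integrableOn) hA fun ω _ => hpt5 ω
    _ = (Vs + 1/2) * (P A).toReal + (1/2) * ∫ ω in A, (Sn ω - Vs)^2 ∂P := by
        rw [integral_add (integrableOn_const (measure_ne_top P A)).integrable
          ((hXint'.const_mul _).integrableOn), setIntegral_const, integral_const_mul,
          smul_eq_mul, measureReal_def]
        ring
    _ ≤ (Vs + 1/2) * (c₁/n) + (1/2) * (σX/n) := by
        refine add_le_add (mul_le_mul_of_nonneg_left hPA (by positivity)) ?_
        refine mul_le_mul_of_nonneg_left (le_trans ?_ hXbd') (by norm_num)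
        exact setIntegral_le_integral hXint'
          (Filter.Eventually.of_forall fun ω => sq_nonneg _)
    _ ≤ ((Vs + 1/2) * c₁ + σX/2 + 1) / n := by
        have h : (Vs + 1/2) * (c₁/(n:ℝ)) + (1/2) * (σX/n)
            = ((Vs + 1/2) * c₁ + σX/2) / n := by ring
        rw [h]
        exact (div_le_div_iff_of_pos_right hnR).2 (by linarith)
end

section
/- Let M_0 > 0 be such that x^* ∈ B(0,M_0) and inf_{|x| > M_0} inf_{z ∈ Q} v(x,z) > 4V^*/P(Z ∈ Q). Then there exists C > 0 such that for all n ≥ 1, P(|X_n^*| > M_0) ≤ C/n. -/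
open MeasureTheory ProbabilityTheory Filter

/-- Let `M₀ > 0` be such that `x⋆ ∈ B(0,M₀)` and
`inf_{|x| > M₀} inf_{z ∈ Q} v(x,z) > 4V*/P(Z ∈ Q)`. Then there exists `C > 0`
such that for all `n ≥ 1`, `P(|Xₙ*| > M₀) ≤ C/n`. -/
theorem prob_minimizer_outside_ball
    (d q : ℕ) (hd : 0 < d) (hq : 0 < q)
    (Ω : Type*) [MeasurableSpace Ω] (P : Measure Ω) [IsProbabilityMeasure P]
    -- the i.i.d. samples `Z₁, Z₂, …`
    (Z : ℕ → Ω → EuclideanSpace ℝ (Fin q))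
    (hZmeas : ∀ i, Measurable (Z i))
    (hZident : ∀ i, Measure.map (Z i) P = Measure.map (Z 0) P)
    (hZindep : iIndepFun Z P)
    -- `V` continuous, positive, coercive, with minimizer `x⋆` and `𝔼[v(x,Z)] = V(x)`
    (V : EuclideanSpace ℝ (Fin d) → ℝ)
    (hVcont : Continuous V) (hVpos : ∀ x, 0 < V x)
    (hVcoercive : Tendsto V (cocompact (EuclideanSpace ℝ (Fin d))) atTop)
    (v : EuclideanSpace ℝ (Fin d) → EuclideanSpace ℝ (Fin q) → ℝ)
    (hvcont : Continuous (fun p : EuclideanSpace ℝ (Fin d) × EuclideanSpace ℝ (Fin q) => v p.1 p.2))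
    (hvnonneg : ∀ x z, 0 ≤ v x z)
    (hvint : ∀ x, Integrable (fun ω => v x (Z 0 ω)) P)
    (hvmean : ∀ x, ∫ ω, v x (Z 0 ω) ∂P = V x)
    (xstar : EuclideanSpace ℝ (Fin d))
    (hxstar_min : ∀ x, V xstar ≤ V x)
    -- assumption (ii): compact `Q` with `κ := P(Z ∈ Q) > 0` and coercive `x ↦ inf_{z ∈ Q} v(x,z)`
    (Q : Set (EuclideanSpace ℝ (Fin q))) (hQcomp : IsCompact Q)
    (hκpos : 0 < (P {ω | Z 0 ω ∈ Q}).toReal)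
    (hQcoercive : Tendsto (fun x => ⨅ z : Q, v x (z : EuclideanSpace ℝ (Fin q)))
      (cocompact (EuclideanSpace ℝ (Fin d))) atTop)
    -- assumption (iv): `𝔼[v(x⋆,Z)²] < ∞`
    (hsq : Integrable (fun ω => (v xstar (Z 0 ω)) ^ 2) P)
    -- the empirical functions `Vₙ` and their (measurable) minimizers `Xₙ*`
    (Vn : ℕ → Ω → EuclideanSpace ℝ (Fin d) → ℝ)
    (hVn : ∀ n ω x, Vn n ω x = (n : ℝ)⁻¹ * ∑ i ∈ Finset.range n, v x (Z i ω))
    (Xn : ℕ → Ω → EuclideanSpace ℝ (Fin d))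
    (hXnmeas : ∀ n, Measurable (Xn n))
    (hXnmin : ∀ n ω x, Vn n ω (Xn n ω) ≤ Vn n ω x)
    -- the choice of `M₀`: `x⋆ ∈ B(0,M₀)` and `inf_{|x|>M₀} inf_{z∈Q} v(x,z) > 4V*/P(Z∈Q)`
    (M0 : ℝ) (hM0pos : 0 < M0) (hxstarM0 : ‖xstar‖ ≤ M0)
    (hM0inf : ∃ m : ℝ, 4 * V xstar / (P {ω | Z 0 ω ∈ Q}).toReal < m ∧
      ∀ x : EuclideanSpace ℝ (Fin d), M0 < ‖x‖ → ∀ z ∈ Q, m ≤ v x z) :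
    ∃ C : ℝ, 0 < C ∧ ∀ n : ℕ, 1 ≤ n →
      (P {ω | M0 < ‖Xn n ω‖}).toReal ≤ C / n := by
  classical
  obtain ⟨m, hm1, hm2⟩ := hM0inf
  set κ : ℝ := (P {ω | Z 0 ω ∈ Q}).toReal with hκdef
  have hQmeas : MeasurableSet Q := hQcomp.isClosed.measurableSet
  set u : EuclideanSpace ℝ (Fin q) → ℝ :=
    fun z => v xstar z - m * Q.indicator (fun _ => (1:ℝ)) z with hudef
  have hgcont : Continuous fun z => v xstar z :=
    hvcont.comp (Continuous.prodMk_right xstar)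
  have humeas : Measurable u :=
    hgcont.measurable.sub ((measurable_const.indicator hQmeas).const_mul m)
  have hindcomp : ∀ i, (fun ω => Q.indicator (fun _ => (1:ℝ)) (Z i ω))
      = Set.indicator (Z i ⁻¹' Q) (fun _ => (1:ℝ)) := by
    intro i; funext ω
    by_cases h : Z i ω ∈ Q <;>
      simp [Set.indicator_of_mem, Set.indicator_of_notMem, h]
  -- MemLp facts
  have hVmem : MemLp (fun ω => v xstar (Z 0 ω)) 2 P := by
    have hmeasV : AEStronglyMeasurable (fun ω => v xstar (Z 0 ω)) P :=
      Measurable.aestronglyMeasurable (by exact hgcont.measurable.comp (hZmeas 0))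
    exact (memLp_two_iff_integrable_sq hmeasV).mpr (by simpa using hsq)
  have hImem : MemLp (fun ω => m * Q.indicator (fun _ => (1:ℝ)) (Z 0 ω)) 2 P := by
    apply MemLp.of_bound
      (((measurable_const.indicator hQmeas).const_mul m).comp (hZmeas 0)).aestronglyMeasurable |m|
    filter_upwards with ω
    by_cases h : Z 0 ω ∈ Q <;>
      simp [Set.indicator_of_mem, Set.indicator_of_notMem, h, abs_nonneg]
  have hU0 : MemLp (fun ω => u (Z 0 ω)) 2 P := hVmem.sub hImem
  have hUmem : ∀ i, MemLp (fun ω => u (Z i ω)) 2 P := by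
    intro i
    have h0 : MemLp u 2 (Measure.map (Z 0) P) :=
      (memLp_map_measure_iff humeas.aestronglyMeasurable (hZmeas 0).aemeasurable).mpr hU0
    rw [← hZident i] at h0
    exact (memLp_map_measure_iff humeas.aestronglyMeasurable (hZmeas i).aemeasurable).mp h0
  -- integral transfer along identical distribution
  have hint_transfer : ∀ (f : EuclideanSpace ℝ (Fin q) → ℝ), Measurable f → ∀ i : ℕ,
      ∫ ω, f (Z i ω) ∂P = ∫ ω, f (Z 0 ω) ∂P := by
    intro f hf i
    rw [← integral_map (hZmeas i).aemeasurable hf.aestronglyMeasurable, hZident i,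
      integral_map (hZmeas 0).aemeasurable hf.aestronglyMeasurable]
  -- the mean of u ∘ Z i
  have hind_int : Integrable (fun ω => Q.indicator (fun _ => (1:ℝ)) (Z 0 ω)) P := by
    rw [hindcomp 0]
    exact (integrable_const (1:ℝ)).indicator ((hZmeas 0) hQmeas)
  have hmean0 : ∫ ω, u (Z 0 ω) ∂P = V xstar - m * κ := by
    simp only [hudef]
    rw [integral_sub (hvint xstar) (hind_int.const_mul m), hvmean xstar, integral_const_mul]
    congr 1
    rw [hindcomp 0, integral_indicator_const (1:ℝ) ((hZmeas 0) hQmeas)]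
    simp only [smul_eq_mul, mul_one, hκdef]
    rfl
  have hmeani : ∀ i : ℕ, ∫ ω, u (Z i ω) ∂P = V xstar - m * κ := fun i =>
    (hint_transfer u humeas i).trans hmean0
  -- variance of u ∘ Z i
  set σ2 : ℝ := variance (fun ω => u (Z 0 ω)) P with hσ2def
  have hσ2nonneg : 0 ≤ σ2 := variance_nonneg _ _
  have hvari : ∀ i : ℕ, variance (fun ω => u (Z i ω)) P = σ2 := by
    intro i
    rw [hσ2def, variance_eq_sub (hUmem i), variance_eq_sub hU0]
    have h2 : ∫ ω, (fun z => u z ^ 2) (Z i ω) ∂P = ∫ ω, (fun z => u z ^ 2) (Z 0 ω) ∂P :=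
      hint_transfer _ (humeas.pow_const 2) i
    have h1 : ∫ ω, u (Z i ω) ∂P = ∫ ω, u (Z 0 ω) ∂P := hint_transfer u humeas i
    simp only [Pi.pow_apply]
    rw [h2, h1]
  -- positivity of the gap δ
  have hmκ : 4 * V xstar < m * κ := by
    have := (div_lt_iff₀ hκpos).mp hm1
    linarith
  set δ : ℝ := m * κ - V xstar with hδdef
  have hδpos : 0 < δ := by have := hVpos xstar; simp only [hδdef]; linarith
  refine ⟨σ2 / δ ^ 2 + 1, by positivity, fun n hn => ?_⟩
  have hnpos : (0:ℝ) < n := by exact_mod_cast hn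
  set S : Ω → ℝ := fun ω => ∑ i ∈ Finset.range n, u (Z i ω) with hSdef
  have hSeq : S = ∑ i ∈ Finset.range n, (fun ω => u (Z i ω)) := by
    funext ω; simp [hSdef]
  have hSmem : MemLp S 2 P := by
    rw [hSeq]; exact memLp_finset_sum' _ fun i _ => hUmem i
  have hES : ∫ ω, S ω ∂P = n * (V xstar - m * κ) := by
    simp only [hSdef]
    rw [integral_finset_sum _ fun i _ => (hUmem i).integrable one_le_two]
    simp [hmeani, Finset.sum_const, Finset.card_range, mul_comm]; ring
  have hVarS : variance S P = n * σ2 := by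
    rw [hSeq, IndepFun.variance_sum (fun i _ => hUmem i) ?_]
    · simp [hvari, Finset.sum_const, Finset.card_range, mul_comm]
    · intro i _ j _ hij
      exact (hZindep.comp (fun _ => u) fun _ => humeas).indepFun hij
  -- Chebyshev
  have hc : (0:ℝ) < n * δ := by positivity
  have hcheb := meas_ge_le_variance_div_sq (μ := P) hSmem hc
  -- event inclusion
  have hsub : {ω | M0 < ‖Xn n ω‖} ⊆ {ω | (n:ℝ) * δ ≤ |S ω - ∫ ω', S ω' ∂P|} := by
    intro ω hω
    simp only [Set.mem_setOf_eq] at hω ⊢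
    have hSnonneg : 0 ≤ S ω := by
      have hmin := hXnmin n ω xstar
      rw [hVn, hVn] at hmin
      have hninv : (0:ℝ) < (n:ℝ)⁻¹ := by positivity
      have hsum : ∑ i ∈ Finset.range n, v (Xn n ω) (Z i ω)
          ≤ ∑ i ∈ Finset.range n, v xstar (Z i ω) :=
        le_of_mul_le_mul_left hmin hninv
      have hlow : ∀ i ∈ Finset.range n,
          m * Q.indicator (fun _ => (1:ℝ)) (Z i ω) ≤ v (Xn n ω) (Z i ω) := by
        intro i _
        by_cases h : Z i ω ∈ Q
        · rw [Set.indicator_of_mem h, mul_one]; exact hm2 _ hω _ h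
        · rw [Set.indicator_of_notMem h, mul_zero]; exact hvnonneg _ _
      have hlow' : ∑ i ∈ Finset.range n, m * Q.indicator (fun _ => (1:ℝ)) (Z i ω)
          ≤ ∑ i ∈ Finset.range n, v xstar (Z i ω) :=
        (Finset.sum_le_sum hlow).trans hsum
      have : S ω = ∑ i ∈ Finset.range n, v xstar (Z i ω)
          - ∑ i ∈ Finset.range n, m * Q.indicator (fun _ => (1:ℝ)) (Z i ω) := by
        simp [hSdef, hudef, Finset.sum_sub_distrib]
      linarith
    rw [hES]
    have h1 : (n:ℝ) * δ ≤ S ω - n * (V xstar - m * κ) := by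
      have : (n:ℝ) * (V xstar - m * κ) = -(n * δ) := by simp only [hδdef]; ring
      linarith
    exact h1.trans (le_abs_self _)
  -- conclude
  have key : (P {ω | M0 < ‖Xn n ω‖}).toReal
      ≤ variance S P / ((n:ℝ) * δ) ^ 2 := by
    calc (P {ω | M0 < ‖Xn n ω‖}).toReal
        ≤ (P {ω | (n:ℝ) * δ ≤ |S ω - ∫ ω', S ω' ∂P|}).toReal :=
          ENNReal.toReal_mono (measure_ne_top P _) (measure_mono hsub)
      _ ≤ (ENNReal.ofReal (variance S P / ((n:ℝ) * δ) ^ 2)).toReal :=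
          ENNReal.toReal_mono ENNReal.ofReal_ne_top hcheb
      _ = variance S P / ((n:ℝ) * δ) ^ 2 :=
          ENNReal.toReal_ofReal (div_nonneg (variance_nonneg _ _) (by positivity))
  refine key.trans ?_
  rw [hVarS]
  have heq : (n:ℝ) * σ2 / ((n:ℝ) * δ) ^ 2 = (σ2 / δ ^ 2) / n := by
    field_simp
  rw [heq]
  gcongr
  linarith
end

section
/- Assume there exists a compact set Q ⊂ ℝ^q such that x ↦ inf_{z∈Q} v(x,z) is coercive and P(Z ∈ Q) > 0. Then, almost surely, for all n sufficiently large, the function V_n(x) = (1/n) Σ_{i=1}^n v(x,Z_i) is coercive (i.e. V_n(x) → ∞ as |x| → ∞). -/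
open MeasureTheory ProbabilityTheory Filter

/-- Assume there exists a compact set `Q ⊆ ℝ^q` such that `x ↦ inf_{z∈Q} v(x,z)` is
coercive and `P(Z ∈ Q) > 0`. Then, almost surely, for all `n` sufficiently large,
the function `Vₙ(x) = (1/n) Σᵢ v(x,Zᵢ)` is coercive (i.e. `Vₙ(x) → ∞` as `|x| → ∞`). -/
theorem empirical_eventually_coercive
    (d q : ℕ) (hd : 0 < d) (hq : 0 < q)
    (Ω : Type*) [MeasurableSpace Ω] (P : Measure Ω) [IsProbabilityMeasure P]
    -- the i.i.d. samples `Z₁, Z₂, …`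
    (Z : ℕ → Ω → EuclideanSpace ℝ (Fin q))
    (hZmeas : ∀ i, Measurable (Z i))
    (hZident : ∀ i, Measure.map (Z i) P = Measure.map (Z 0) P)
    (hZindep : iIndepFun Z P)
    -- `v` continuous and nonnegative
    (v : EuclideanSpace ℝ (Fin d) → EuclideanSpace ℝ (Fin q) → ℝ)
    (hvcont : Continuous (fun p : EuclideanSpace ℝ (Fin d) × EuclideanSpace ℝ (Fin q) => v p.1 p.2))
    (hvnonneg : ∀ x z, 0 ≤ v x z)
    -- assumption (ii): compact `Q`, coercive infimum, positive probability
    (Q : Set (EuclideanSpace ℝ (Fin q))) (hQcomp : IsCompact Q)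
    (hκpos : 0 < P {ω | Z 0 ω ∈ Q})
    (hQcoercive : Tendsto (fun x => ⨅ z : Q, v x (z : EuclideanSpace ℝ (Fin q)))
      (cocompact (EuclideanSpace ℝ (Fin d))) atTop)
    -- the empirical functions `Vₙ`
    (Vn : ℕ → Ω → EuclideanSpace ℝ (Fin d) → ℝ)
    (hVn : ∀ n ω x, Vn n ω x = (n : ℝ)⁻¹ * ∑ i ∈ Finset.range n, v x (Z i ω)) :
    ∀ᵐ ω ∂P, ∀ᶠ n in atTop,
      Tendsto (fun x => Vn n ω x) (cocompact (EuclideanSpace ℝ (Fin d))) atTop := by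

  classical
  set g : EuclideanSpace ℝ (Fin d) → ℝ :=
    fun x => ⨅ z : Q, v x (z : EuclideanSpace ℝ (Fin q)) with hg
  have hgnonneg : ∀ x, 0 ≤ g x := fun x => Real.iInf_nonneg fun z => hvnonneg _ _
  have hgbdd : ∀ x, BddBelow (Set.range fun z : Q => v x (z : EuclideanSpace ℝ (Fin q))) := by
    intro x
    exact ⟨0, fun y hy => by obtain ⟨z, rfl⟩ := hy; exact hvnonneg _ _⟩
  have hQmeas : MeasurableSet Q := hQcomp.isClosed.measurableSet
  set f : EuclideanSpace ℝ (Fin q) → ℝ := Q.indicator (fun _ => 1) with hfdef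
  have hfmeas : Measurable f := measurable_const.indicator hQmeas
  set X : ℕ → Ω → ℝ := fun i ω => f (Z i ω) with hX
  have hXeq : ∀ i, X i = (Z i ⁻¹' Q).indicator (fun _ => (1:ℝ)) := by
    intro i; ext ω
    by_cases h : Z i ω ∈ Q <;> simp [hX, hfdef, Set.indicator, h]
  have hint : Integrable (X 0) P := by
    rw [hXeq 0]
    exact (integrable_const (1:ℝ)).indicator (hQmeas.preimage (hZmeas 0))
  have hindep : Pairwise fun i j => IndepFun (X i) (X j) P := fun i j hij =>
    (hZindep.indepFun hij).comp hfmeas hfmeas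
  have hident : ∀ i, IdentDistrib (X i) (X 0) P P := fun i =>
    (⟨(hZmeas i).aemeasurable, (hZmeas 0).aemeasurable, hZident i⟩ :
      IdentDistrib (Z i) (Z 0) P P).comp hfmeas
  have hslln := ProbabilityTheory.strong_law_ae X hint hindep hident
  set κ : ℝ := (P {ω | Z 0 ω ∈ Q}).toReal with hκ
  have hEX : P[X 0] = κ := by
    rw [hXeq 0, integral_indicator_const (1:ℝ) (hQmeas.preimage (hZmeas 0))]
    simp [hκ, Set.preimage_setOf_eq]
    rfl
  have hκpos' : (0:ℝ) < κ := ENNReal.toReal_pos hκpos.ne' (measure_ne_top P _)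
  filter_upwards [hslln] with ω hω
  rw [hEX] at hω
  have hev : ∀ᶠ n : ℕ in atTop, κ / 2 ≤ (n:ℝ)⁻¹ • ∑ i ∈ Finset.range n, X i ω :=
    hω.eventually (eventually_ge_nhds (by linarith))
  filter_upwards [hev, eventually_ge_atTop 1] with n hn hn1
  have hmul : Tendsto (fun x => κ / 2 * g x) (cocompact (EuclideanSpace ℝ (Fin d))) atTop :=
    hQcoercive.const_mul_atTop (by positivity)
  refine tendsto_atTop_mono (fun x => ?_) hmul
  rw [hVn]
  have h1 : ∀ i ∈ Finset.range n, X i ω * g x ≤ v x (Z i ω) := by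
    intro i _
    by_cases h : Z i ω ∈ Q
    · have hle : g x ≤ v x (Z i ω) := ciInf_le (hgbdd x) ⟨Z i ω, h⟩
      simpa [hX, hfdef, Set.indicator, h] using hle
    · simp [hX, hfdef, Set.indicator, h, hvnonneg]
  have h2 : (∑ i ∈ Finset.range n, X i ω) * g x ≤ ∑ i ∈ Finset.range n, v x (Z i ω) := by
    rw [Finset.sum_mul]
    exact Finset.sum_le_sum h1
  have hnpos : (0:ℝ) < n := by exact_mod_cast hn1
  calc κ / 2 * g x ≤ ((n:ℝ)⁻¹ • ∑ i ∈ Finset.range n, X i ω) * g x :=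
        mul_le_mul_of_nonneg_right hn (hgnonneg x)
    _ = (n:ℝ)⁻¹ * ((∑ i ∈ Finset.range n, X i ω) * g x) := by
        simp [smul_eq_mul]; ring
    _ ≤ (n:ℝ)⁻¹ * ∑ i ∈ Finset.range n, v x (Z i ω) :=
        mul_le_mul_of_nonneg_left h2 (by positivity)
end
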